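/- Let X ∈ R^{m1×m2} be a matrix with singular value decomposition X = Σ_j σ_j(X) u_j(X) v_j(X)^T, and let λ > 0, m1, m2 ≥ 1. Then the function F(A) = ||A − X||²₂ + λ m1 m2 ||A||₁ over A ∈ R^{m1×m2} has a unique minimizer, given by soft-thresholding of the singular values: Â = Σ_j (σ_j(X) − λ m1 m2 / 2)₊ u_j(X) v_j(X)^T, where x₊ = max{x, 0}. -/

import Mathlib

open MeasureTheory ProbabilityTheory Matrix Real
open scoped ENNReal NNReal BigOperators

noncomputable section

instance {m1 m2 : ℕ} : MeasurableSpace (Matrix (Fin m1) (Fin m2) ℝ) :=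
  (inferInstance : MeasurableSpace (Fin m1 → Fin m2 → ℝ))

/-- Trace inner product `⟨A,B⟩ = tr(AᵀB)`. -/
def tip {m1 m2 : ℕ} (A B : Matrix (Fin m1) (Fin m2) ℝ) : ℝ := (Aᵀ * B).trace

/-- Frobenius norm `‖A‖₂`. -/
def frob {m1 m2 : ℕ} (A : Matrix (Fin m1) (Fin m2) ℝ) : ℝ :=
  Real.sqrt (∑ i, ∑ j, (A i j) ^ 2)

/-- Removed from Mathlib; restored with its old statement. -/
theorem Matrix.isHermitian_transpose_mul_self {m n : Type*} [Fintype m] (A : Matrix m n ℝ) :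
    (Aᵀ * A).IsHermitian := by
  simpa using Matrix.isHermitian_conjTranspose_mul_self A

/-- Singular values (unordered): square roots of the eigenvalues of `AᴴA`. -/
def sval {m1 m2 : ℕ} (A : Matrix (Fin m1) (Fin m2) ℝ) (j : Fin m2) : ℝ :=
  Real.sqrt ((Matrix.isHermitian_transpose_mul_self A).eigenvalues j)

/-- Nuclear norm `‖A‖₁`: sum of singular values. -/
def nuc {m1 m2 : ℕ} (A : Matrix (Fin m1) (Fin m2) ℝ) : ℝ := ∑ j, sval A j

/-- Operator (spectral) norm `‖A‖_∞`. -/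
def opnorm {m1 m2 : ℕ} (A : Matrix (Fin m1) (Fin m2) ℝ) : ℝ :=
  ‖LinearMap.toContinuousLinearMap (Matrix.toEuclideanLin A)‖

/-- Squared `L₂(Π)`-norm: `‖A‖²_{L₂(Π)} = (1/n) ∑ᵢ E⟨A, Xᵢ⟩²`. -/
def l2sq {Ω : Type*} [MeasurableSpace Ω] (μ : Measure Ω) {n m1 m2 : ℕ}
    (X : Fin n → Ω → Matrix (Fin m1) (Fin m2) ℝ) (A : Matrix (Fin m1) (Fin m2) ℝ) : ℝ :=
  (1 / (n : ℝ)) * ∑ i, ∫ ω, (tip A (X i ω)) ^ 2 ∂μ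

/-- The matrix `E(Yᵢ Xᵢ)` (entrywise expectation). -/
def meanYX {Ω : Type*} [MeasurableSpace Ω] (μ : Measure Ω) {n m1 m2 : ℕ}
    (X : Fin n → Ω → Matrix (Fin m1) (Fin m2) ℝ) (Y : Fin n → Ω → ℝ) (i : Fin n) :
    Matrix (Fin m1) (Fin m2) ℝ :=
  Matrix.of fun j k => ∫ ω, Y i ω * X i ω j k ∂μ

/-- The stochastic error matrix `M = (1/n) ∑ᵢ (Yᵢ Xᵢ − E(Yᵢ Xᵢ))`. -/
def errM {Ω : Type*} [MeasurableSpace Ω] (μ : Measure Ω) {n m1 m2 : ℕ}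
    (X : Fin n → Ω → Matrix (Fin m1) (Fin m2) ℝ) (Y : Fin n → Ω → ℝ) (ω : Ω) :
    Matrix (Fin m1) (Fin m2) ℝ :=
  (n : ℝ)⁻¹ • ∑ i, (Y i ω • X i ω - meanYX μ X Y i)

/-- The penalized objective `L_n(A) = ‖A‖²_{L₂(Π)} − ⟨(2/n)∑ᵢYᵢXᵢ, A⟩ + λ‖A‖₁`. -/
def Ln {Ω : Type*} [MeasurableSpace Ω] (μ : Measure Ω) {n m1 m2 : ℕ}
    (X : Fin n → Ω → Matrix (Fin m1) (Fin m2) ℝ) (Y : Fin n → Ω → ℝ) (lam : ℝ)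
    (A : Matrix (Fin m1) (Fin m2) ℝ) (ω : Ω) : ℝ :=
  l2sq μ X A - tip ((2 / (n : ℝ)) • ∑ i, Y i ω • X i ω) A + lam * nuc A

/-- Matrix of the orthogonal projection onto a subspace of `ℝ^d`. -/
def projMat {d : ℕ} (K : Submodule ℝ (EuclideanSpace ℝ (Fin d))) : Matrix (Fin d) (Fin d) ℝ :=
  Matrix.toEuclideanLin.symm (K.subtype ∘ₗ (K.orthogonalProjectionOnto).toLinearMap)

/-- Column space of `A` (the span of its left singular vectors `S₁`). -/
def colSpan {m1 m2 : ℕ} (A : Matrix (Fin m1) (Fin m2) ℝ) :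
    Submodule ℝ (EuclideanSpace ℝ (Fin m1)) := LinearMap.range (Matrix.toEuclideanLin A)

/-- Row space of `A` (the span of its right singular vectors `S₂`). -/
def rowSpan {m1 m2 : ℕ} (A : Matrix (Fin m1) (Fin m2) ℝ) :
    Submodule ℝ (EuclideanSpace ℝ (Fin m2)) := LinearMap.range (Matrix.toEuclideanLin Aᵀ)

/-- `𝒫_A^⊥(B) = P_{S₁ᗮ} B P_{S₂ᗮ}` where `(S₁, S₂)` is the support of `A`. -/
def Pperp {m1 m2 : ℕ} (A B : Matrix (Fin m1) (Fin m2) ℝ) : Matrix (Fin m1) (Fin m2) ℝ :=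
  projMat (colSpan A)ᗮ * B * projMat (rowSpan A)ᗮ

/-- `𝒫_A(B) = B - P_{S₁ᗮ} B P_{S₂ᗮ}`. -/
def calP {m1 m2 : ℕ} (A B : Matrix (Fin m1) (Fin m2) ℝ) : Matrix (Fin m1) (Fin m2) ℝ :=
  B - Pperp A B

/-- The uniform distribution on the matrix completion basis
`𝒳 = {eⱼ(m₁) eₖ(m₂)ᵀ}`. -/
def unifX (m1 m2 : ℕ) : Measure (Matrix (Fin m1) (Fin m2) ℝ) :=
  ((m1 * m2 : ℝ≥0∞))⁻¹ •
    ∑ j : Fin m1, ∑ k : Fin m2, Measure.dirac (Matrix.single j k (1 : ℝ))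

/-- The matrix `𝐗 = (m₁m₂/n) ∑ᵢ Yᵢ Xᵢ`. -/
def hatX {Ω : Type*} {n m1 m2 : ℕ} (X : Fin n → Ω → Matrix (Fin m1) (Fin m2) ℝ)
    (Y : Fin n → Ω → ℝ) (ω : Ω) : Matrix (Fin m1) (Fin m2) ℝ :=
  ((m1 * m2 : ℝ) / (n : ℝ)) • ∑ i, Y i ω • X i ω

/-- The matrix-completion objective `‖A − B‖₂² + λ m₁m₂ ‖A‖₁`. -/
def Fobj {m1 m2 : ℕ} (lam : ℝ) (B A : Matrix (Fin m1) (Fin m2) ℝ) : ℝ :=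
  frob (A - B) ^ 2 + lam * (m1 * m2 : ℝ) * nuc A

namespace SoftThresh

lemma tip_eq_sum {m1 m2 : ℕ} (A B : Matrix (Fin m1) (Fin m2) ℝ) :
    tip A B = ∑ i, ∑ j, A i j * B i j := by
  rw [tip, Matrix.trace]
  simp only [Matrix.diag, Matrix.mul_apply, Matrix.transpose_apply]
  exact Finset.sum_comm

lemma frob_sq {m1 m2 : ℕ} (A : Matrix (Fin m1) (Fin m2) ℝ) :
    frob A ^ 2 = tip A A := by
  rw [frob, Real.sq_sqrt (by positivity), tip_eq_sum]
  simp [sq]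

lemma frob_nonneg {m1 m2 : ℕ} (A : Matrix (Fin m1) (Fin m2) ℝ) : 0 ≤ frob A :=
  Real.sqrt_nonneg _

lemma tip_comm {m1 m2 : ℕ} (A B : Matrix (Fin m1) (Fin m2) ℝ) : tip A B = tip B A := by
  simp only [tip_eq_sum]; congr 1; ext i; congr 1; ext j; ring

lemma tip_add_left {m1 m2 : ℕ} (A B C : Matrix (Fin m1) (Fin m2) ℝ) :
    tip (A + B) C = tip A C + tip B C := by
  simp only [tip_eq_sum, Matrix.add_apply, add_mul, Finset.sum_add_distrib]

lemma tip_sub_left {m1 m2 : ℕ} (A B C : Matrix (Fin m1) (Fin m2) ℝ) :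
    tip (A - B) C = tip A C - tip B C := by
  simp only [tip_eq_sum, Matrix.sub_apply, sub_mul, Finset.sum_sub_distrib]

lemma tip_sub_right {m1 m2 : ℕ} (A B C : Matrix (Fin m1) (Fin m2) ℝ) :
    tip A (B - C) = tip A B - tip A C := by
  rw [tip_comm, tip_sub_left, tip_comm B A, tip_comm C A]

lemma tip_sum_left {m1 m2 : ℕ} {ι : Type*} (s : Finset ι)
    (f : ι → Matrix (Fin m1) (Fin m2) ℝ) (C : Matrix (Fin m1) (Fin m2) ℝ) :
    tip (∑ i ∈ s, f i) C = ∑ i ∈ s, tip (f i) C := by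
  simp only [tip_eq_sum, Matrix.sum_apply, Finset.sum_mul]
  have h1 : ∀ i : Fin m1, (∑ j : Fin m2, ∑ x ∈ s, f x i j * C i j)
      = ∑ x ∈ s, ∑ j : Fin m2, f x i j * C i j := fun i => Finset.sum_comm
  simp_rw [h1]
  exact Finset.sum_comm

lemma tip_smul_left {m1 m2 : ℕ} (c : ℝ) (A B : Matrix (Fin m1) (Fin m2) ℝ) :
    tip (c • A) B = c * tip A B := by
  simp only [tip_eq_sum, Matrix.smul_apply, smul_eq_mul, Finset.mul_sum]
  congr 1; ext i; congr 1; ext j; ring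

lemma tip_vecMulVec {m1 m2 : ℕ} (a : Fin m1 → ℝ) (b : Fin m2 → ℝ)
    (C : Matrix (Fin m1) (Fin m2) ℝ) :
    tip (vecMulVec a b) C = ∑ i, ∑ j, a i * b j * C i j := by
  simp only [tip_eq_sum, Matrix.vecMulVec_apply]

lemma tip_vecMulVec_vecMulVec {m1 m2 : ℕ} (a x : Fin m1 → ℝ) (b y : Fin m2 → ℝ) :
    tip (vecMulVec a b) (vecMulVec x y) = (∑ i, a i * x i) * (∑ j, b j * y j) := by
  rw [tip_vecMulVec, Finset.sum_mul_sum]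
  congr 1; ext i; congr 1; ext j
  simp [Matrix.vecMulVec_apply]; ring

/-- tip of two spectral-type sums with shared orthonormal vectors. -/
lemma tip_sum_sum {m1 m2 r : ℕ} (c d : Fin r → ℝ) (u : Fin r → Fin m1 → ℝ)
    (v : Fin r → Fin m2 → ℝ)
    (hu : ∀ j k : Fin r, ∑ i, u j i * u k i = if j = k then (1 : ℝ) else 0)
    (hv : ∀ j k : Fin r, ∑ i, v j i * v k i = if j = k then (1 : ℝ) else 0) :
    tip (∑ j, c j • vecMulVec (u j) (v j)) (∑ j, d j • vecMulVec (u j) (v j)) =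
      ∑ j, c j * d j := by
  rw [tip_sum_left]
  have : ∀ j : Fin r, tip (c j • vecMulVec (u j) (v j))
      (∑ k, d k • vecMulVec (u k) (v k)) = c j * d j := by
    intro j
    rw [tip_smul_left, tip_comm, tip_sum_left]
    have : ∀ k : Fin r, tip (d k • vecMulVec (u k) (v k)) (vecMulVec (u j) (v j)) =
        if k = j then d k else 0 := by
      intro k
      rw [tip_smul_left, tip_vecMulVec_vecMulVec, hu k j, hv k j]
      by_cases h : k = j <;> simp [h]
    rw [Finset.sum_congr rfl fun k _ => this k, Finset.sum_ite_eq' Finset.univ j d]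
    simp [mul_comm]
  rw [Finset.sum_congr rfl fun j _ => this j]

section Part2
variable {ι : Type*} [Fintype ι]

lemma bessel {d : ℕ} (f : ι → Fin d → ℝ)
    (horth : ∀ j k, j ≠ k → ∑ i, f j i * f k i = 0)
    (hnorm : ∀ j, ∑ i, f j i * f j i ≤ 1)
    (x : Fin d → ℝ) :
    ∑ j, (∑ i, f j i * x i) ^ 2 ≤ ∑ i, x i * x i := by
  classical
  set c : ι → ℝ := fun j => ∑ i, f j i * x i with hc
  have key : (0:ℝ) ≤ ∑ i, (x i - ∑ j, c j * f j i) * (x i - ∑ j, c j * f j i) :=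
    Finset.sum_nonneg fun i _ => mul_self_nonneg _
  have A1 : ∑ i, (∑ j, c j * f j i) * x i = ∑ j, c j ^ 2 := by
    simp_rw [Finset.sum_mul]
    rw [Finset.sum_comm]
    refine Finset.sum_congr rfl fun j _ => ?_
    simp_rw [mul_assoc]
    rw [← Finset.mul_sum, hc, sq]
  have A2 : ∑ i, (∑ j, c j * f j i) * (∑ k, c k * f k i)
      = ∑ j, c j ^ 2 * (∑ i, f j i * f j i) := by
    have e : ∀ i : Fin d, (∑ j, c j * f j i) * (∑ k, c k * f k i)
        = ∑ j, ∑ k, (c j * c k) * (f j i * f k i) := by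
      intro i
      rw [Finset.sum_mul_sum]
      exact Finset.sum_congr rfl fun j _ => Finset.sum_congr rfl fun k _ => by ring
    simp_rw [e]
    rw [Finset.sum_comm]
    refine Finset.sum_congr rfl fun j _ => ?_
    rw [Finset.sum_comm]
    have e2 : ∀ k, ∑ i, (c j * c k) * (f j i * f k i) = (c j * c k) * ∑ i, f j i * f k i :=
      fun k => (Finset.mul_sum _ _ _).symm
    simp_rw [e2]
    rw [Finset.sum_eq_single j]
    · ring
    · intro k _ hkj
      rw [horth j k (Ne.symm hkj), mul_zero]
    · intro h; exact absurd (Finset.mem_univ j) h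
  have A3 : ∑ j, c j ^ 2 * (∑ i, f j i * f j i) ≤ ∑ j, c j ^ 2 :=
    Finset.sum_le_sum fun j _ => by nlinarith [sq_nonneg (c j), hnorm j]
  have expand : ∑ i, (x i - ∑ j, c j * f j i) * (x i - ∑ j, c j * f j i)
      = (∑ i, x i * x i) - 2 * (∑ i, (∑ j, c j * f j i) * x i)
        + ∑ i, (∑ j, c j * f j i) * (∑ k, c k * f k i) := by
    rw [Finset.mul_sum, ← Finset.sum_sub_distrib, ← Finset.sum_add_distrib]
    refine Finset.sum_congr rfl fun i _ => ?_
    ring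
  rw [expand, A1, A2] at key
  calc ∑ j, (∑ i, f j i * x i) ^ 2 = ∑ j, c j ^ 2 := rfl
    _ ≤ ∑ i, x i * x i := by linarith

lemma pairing {d1 d2 : ℕ} (a : ι → Fin d1 → ℝ) (b : ι → Fin d2 → ℝ)
    (x : Fin d1 → ℝ) (y : Fin d2 → ℝ)
    (haorth : ∀ j k, j ≠ k → ∑ i, a j i * a k i = 0)
    (hanorm : ∀ j, ∑ i, a j i * a j i ≤ 1)
    (hborth : ∀ j k, j ≠ k → ∑ i, b j i * b k i = 0)
    (hbnorm : ∀ j, ∑ i, b j i * b j i ≤ 1)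
    (hx : ∑ i, x i * x i ≤ 1) (hy : ∑ i, y i * y i ≤ 1) :
    ∑ j, (∑ i, a j i * x i) * (∑ i, b j i * y i) ≤ 1 := by
  have h1 := bessel a haorth hanorm x
  have h2 := bessel b hborth hbnorm y
  have hcs := Finset.sum_mul_sq_le_sq_mul_sq Finset.univ
    (fun j => ∑ i, a j i * x i) (fun j => ∑ i, b j i * y i)
  have hs1 : (0:ℝ) ≤ ∑ j, (∑ i, a j i * x i) ^ 2 :=
    Finset.sum_nonneg fun j _ => sq_nonneg _
  have hs2 : (0:ℝ) ≤ ∑ j, (∑ i, b j i * y i) ^ 2 :=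
    Finset.sum_nonneg fun j _ => sq_nonneg _
  nlinarith [sq_nonneg ((∑ j, (∑ i, a j i * x i) * (∑ i, b j i * y i)) - 1)]

end Part2

lemma sum_mul_mul {d : ℕ} (a b : ℝ) (f g : Fin d → ℝ) :
    ∑ i, (a * f i) * (b * g i) = (a * b) * ∑ i, f i * g i := by
  rw [Finset.mul_sum]; exact Finset.sum_congr rfl fun i _ => by ring

section SVD
variable {m1 m2 : ℕ} (M : Matrix (Fin m1) (Fin m2) ℝ)

def qv (k : Fin m2) : Fin m2 → ℝ := ⇑((Matrix.isHermitian_transpose_mul_self M).eigenvectorBasis k)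

def pv (k : Fin m2) : Fin m1 → ℝ :=
  if sval M k = 0 then 0 else (sval M k)⁻¹ • (M *ᵥ qv M k)

lemma qv_orth (j k : Fin m2) : ∑ i, qv M j i * qv M k i = if j = k then 1 else 0 := by
  have h := ((Matrix.isHermitian_transpose_mul_self M).eigenvectorBasis).orthonormal
  rw [orthonormal_iff_ite] at h
  have h2 := h j k
  simpa [PiLp.inner_apply, RCLike.inner_apply, qv, mul_comm] using h2

lemma qv_rows (i j : Fin m2) : ∑ k, qv M k i * qv M k j = if i = j then 1 else 0 := by
  classical
  set Q : Matrix (Fin m2) (Fin m2) ℝ := Matrix.of (fun k i => qv M k i) with hQ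
  have h1 : Q * Qᵀ = 1 := by
    ext a b
    simp only [Matrix.mul_apply, Matrix.transpose_apply, Matrix.one_apply, hQ, Matrix.of_apply]
    exact qv_orth M a b
  have h2 : Qᵀ * Q = 1 := mul_eq_one_comm.mp h1
  have h3 : (Qᵀ * Q) i j = (1 : Matrix (Fin m2) (Fin m2) ℝ) i j := by rw [h2]
  simpa [Matrix.mul_apply, Matrix.transpose_apply, Matrix.one_apply, hQ] using h3

lemma eig_nonneg (k : Fin m2) : 0 ≤ (Matrix.isHermitian_transpose_mul_self M).eigenvalues k :=
  (Matrix.posSemidef_conjTranspose_mul_self M).eigenvalues_nonneg k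

lemma sval_nonneg (k : Fin m2) : 0 ≤ sval M k := Real.sqrt_nonneg _

lemma sval_sq (k : Fin m2) :
    sval M k ^ 2 = (Matrix.isHermitian_transpose_mul_self M).eigenvalues k :=
  Real.sq_sqrt (eig_nonneg M k)

lemma dot_Mq (j k : Fin m2) :
    ∑ i, (M *ᵥ qv M j) i * (M *ᵥ qv M k) i = if j = k then sval M k ^ 2 else 0 := by
  have e0 : ∑ i, (M *ᵥ qv M j) i * (M *ᵥ qv M k) i
      = ((Mᴴ * M) *ᵥ qv M j) ⬝ᵥ qv M k := by
    have h1 : ∑ i, (M *ᵥ qv M j) i * (M *ᵥ qv M k) i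
        = (M *ᵥ qv M j) ⬝ᵥ (M *ᵥ qv M k) := rfl
    rw [h1, Matrix.dotProduct_mulVec, ← Matrix.mulVec_transpose,
      Matrix.mulVec_mulVec, ← Matrix.conjTranspose_eq_transpose_of_trivial M]
  rw [e0]
  have e1 : (Mᴴ * M) *ᵥ qv M j
      = ((Matrix.isHermitian_transpose_mul_self M).eigenvalues j) • qv M j :=
    (Matrix.isHermitian_transpose_mul_self M).mulVec_eigenvectorBasis j
  rw [e1, smul_dotProduct]
  have e2 : qv M j ⬝ᵥ qv M k = if j = k then 1 else 0 := qv_orth M j k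
  rw [e2]
  by_cases h : j = k
  · subst h; simp [sval_sq M j]
  · simp [h]

lemma Mq_eq (k : Fin m2) : M *ᵥ qv M k = sval M k • pv M k := by
  by_cases h : sval M k = 0
  · have hd := dot_Mq M k k
    rw [if_pos rfl, h] at hd
    norm_num at hd
    have hz : ∀ i, (M *ᵥ qv M k) i = 0 := by
      intro i
      have := (Finset.sum_eq_zero_iff_of_nonneg
        (fun i _ => mul_self_nonneg ((M *ᵥ qv M k) i))).mp hd i (Finset.mem_univ i)
      exact mul_self_eq_zero.mp this
    funext i
    simp [h, hz i]
  · rw [pv, if_neg h, smul_smul, mul_inv_cancel₀ h, one_smul]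

lemma pv_self (k : Fin m2) (h : sval M k ≠ 0) : ∑ i, pv M k i * pv M k i = 1 := by
  have e : ∀ i, pv M k i = (sval M k)⁻¹ * (M *ᵥ qv M k) i := by
    intro i; rw [pv, if_neg h]; simp
  simp_rw [e]
  rw [sum_mul_mul, dot_Mq M k k, if_pos rfl]
  field_simp

lemma pv_orth (j k : Fin m2) (hjk : j ≠ k) : ∑ i, pv M j i * pv M k i = 0 := by
  by_cases hj : sval M j = 0
  · simp [pv, hj]
  by_cases hk : sval M k = 0
  · simp [pv, hk]
  have ej : ∀ i, pv M j i = (sval M j)⁻¹ * (M *ᵥ qv M j) i := by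
    intro i; rw [pv, if_neg hj]; simp
  have ek : ∀ i, pv M k i = (sval M k)⁻¹ * (M *ᵥ qv M k) i := by
    intro i; rw [pv, if_neg hk]; simp
  simp_rw [ej, ek]
  rw [sum_mul_mul, dot_Mq M j k, if_neg hjk, mul_zero]

lemma pv_norm (k : Fin m2) : ∑ i, pv M k i * pv M k i ≤ 1 := by
  by_cases h : sval M k = 0
  · simp [pv, h]
  · rw [pv_self M k h]

lemma pv_dot (k : Fin m2) : ∑ i, pv M k i * (M *ᵥ qv M k) i = sval M k := by
  rw [Mq_eq M k]
  by_cases h : sval M k = 0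
  · simp [h]
  · have e : ∀ i, pv M k i * (sval M k • pv M k) i
        = sval M k * (pv M k i * pv M k i) := by
      intro i; simp [Pi.smul_apply, smul_eq_mul]; ring
    simp_rw [e]
    rw [← Finset.mul_sum, pv_self M k h, mul_one]

lemma svd_expand : M = ∑ k, vecMulVec (M *ᵥ qv M k) (qv M k) := by
  ext i j
  simp only [Matrix.sum_apply, Matrix.vecMulVec_apply, Matrix.mulVec, dotProduct]
  have e : ∀ k : Fin m2, (∑ l, M i l * qv M k l) * qv M k j
      = ∑ l, M i l * (qv M k l * qv M k j) := by
    intro k; rw [Finset.sum_mul]; exact Finset.sum_congr rfl fun l _ => by ring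
  simp_rw [e]
  rw [Finset.sum_comm]
  have e2 : ∀ l, ∑ k, M i l * (qv M k l * qv M k j)
      = M i l * ∑ k, qv M k l * qv M k j := fun l => (Finset.mul_sum _ _ _).symm
  simp_rw [e2, qv_rows M]
  simp

lemma nuc_eq : nuc M = ∑ k, ∑ i, pv M k i * (M *ᵥ qv M k) i := by
  rw [nuc]
  exact Finset.sum_congr rfl fun k _ => (pv_dot M k).symm

end SVD

lemma tip_sum_right {m1 m2 : ℕ} {ι : Type*} (s : Finset ι)
    (C : Matrix (Fin m1) (Fin m2) ℝ) (f : ι → Matrix (Fin m1) (Fin m2) ℝ) :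
    tip C (∑ i ∈ s, f i) = ∑ i ∈ s, tip C (f i) := by
  rw [tip_comm, tip_sum_left]
  exact Finset.sum_congr rfl fun i _ => tip_comm _ _

/-- Key duality bound: pairing against sub-contractive spectral sums is at most `nuc`. -/
lemma dual_bound {m1 m2 r : ℕ} (M : Matrix (Fin m1) (Fin m2) ℝ)
    (c : Fin r → ℝ) (u : Fin r → Fin m1 → ℝ) (v : Fin r → Fin m2 → ℝ)
    (hc0 : ∀ j, 0 ≤ c j) (hc1 : ∀ j, c j ≤ 1)
    (hu : ∀ j k, ∑ i, u j i * u k i = if j = k then (1:ℝ) else 0)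
    (hv : ∀ j k, ∑ i, v j i * v k i = if j = k then (1:ℝ) else 0) :
    ∑ j, c j * tip (vecMulVec (u j) (v j)) M ≤ nuc M := by
  have step : ∀ j : Fin r, tip (vecMulVec (u j) (v j)) M
      = ∑ k, (∑ i, u j i * (M *ᵥ qv M k) i) * (∑ l, v j l * qv M k l) := by
    intro j
    conv_lhs => rw [svd_expand M]
    rw [tip_sum_right]
    exact Finset.sum_congr rfl fun k _ => tip_vecMulVec_vecMulVec _ _ _ _
  have inner : ∀ (k : Fin m2) (j : Fin r),
      c j * ((∑ i, u j i * (M *ᵥ qv M k) i) * (∑ l, v j l * qv M k l))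
      = sval M k * ((∑ i, (c j * u j i) * pv M k i) * (∑ l, v j l * qv M k l)) := by
    intro k j
    have h1 : ∑ i, u j i * (M *ᵥ qv M k) i = sval M k * ∑ i, u j i * pv M k i := by
      rw [Mq_eq M k, Finset.mul_sum]
      exact Finset.sum_congr rfl fun i _ => by
        simp [Pi.smul_apply, smul_eq_mul]; ring
    have h2 : ∑ i, (c j * u j i) * pv M k i = c j * ∑ i, u j i * pv M k i := by
      rw [Finset.mul_sum]
      exact Finset.sum_congr rfl fun i _ => by ring
    rw [h1, h2]
    ring
  calc ∑ j, c j * tip (vecMulVec (u j) (v j)) M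
      = ∑ j, ∑ k, c j * ((∑ i, u j i * (M *ᵥ qv M k) i) * (∑ l, v j l * qv M k l)) := by
        refine Finset.sum_congr rfl fun j _ => ?_
        rw [step j, Finset.mul_sum]
    _ = ∑ k, ∑ j, c j * ((∑ i, u j i * (M *ᵥ qv M k) i) * (∑ l, v j l * qv M k l)) :=
        Finset.sum_comm
    _ = ∑ k, sval M k *
          ∑ j, (∑ i, (c j * u j i) * pv M k i) * (∑ l, v j l * qv M k l) := by
        refine Finset.sum_congr rfl fun k _ => ?_
        rw [Finset.mul_sum]
        exact Finset.sum_congr rfl fun j _ => inner k j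
    _ ≤ ∑ k, sval M k := by
        refine Finset.sum_le_sum fun k _ => ?_
        have hp : ∑ j, (∑ i, (c j * u j i) * pv M k i) * (∑ l, v j l * qv M k l) ≤ 1 := by
          refine pairing (fun j i => c j * u j i) v (pv M k) (qv M k) ?_ ?_ ?_ ?_ ?_ ?_
          · intro a b hab
            rw [sum_mul_mul, hu a b, if_neg hab, mul_zero]
          · intro a
            rw [sum_mul_mul, hu a a, if_pos rfl, mul_one]
            nlinarith [hc0 a, hc1 a]
          · intro a b hab
            rw [hv a b, if_neg hab]
          · intro a
            rw [hv a a, if_pos rfl]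
          · exact pv_norm M k
          · rw [qv_orth M k k, if_pos rfl]
        calc sval M k * ∑ j, (∑ i, (c j * u j i) * pv M k i) * (∑ l, v j l * qv M k l)
            ≤ sval M k * 1 := mul_le_mul_of_nonneg_left hp (sval_nonneg M k)
          _ = sval M k := mul_one _
    _ = nuc M := rfl

/-- Upper bound for the nuclear norm of a spectral-type sum. -/
lemma nuc_le_sum {m1 m2 r : ℕ} (t : Fin r → ℝ) (ht : ∀ j, 0 ≤ t j)
    (u : Fin r → Fin m1 → ℝ) (v : Fin r → Fin m2 → ℝ)
    (hu : ∀ j k, ∑ i, u j i * u k i = if j = k then (1:ℝ) else 0)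
    (hv : ∀ j k, ∑ i, v j i * v k i = if j = k then (1:ℝ) else 0) :
    nuc (∑ j, t j • vecMulVec (u j) (v j)) ≤ ∑ j, t j := by
  set N := ∑ j, t j • vecMulVec (u j) (v j) with hN
  rw [nuc_eq N]
  have hNmv : ∀ (k : Fin m2) (i : Fin m1),
      (N *ᵥ qv N k) i = ∑ j, t j * u j i * (∑ l, v j l * qv N k l) := by
    intro k i
    have h0 : (N *ᵥ qv N k) i = ∑ l, N i l * qv N k l := rfl
    rw [h0]
    have h1 : ∀ l, N i l = ∑ j, t j * (u j i * v j l) := by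
      intro l
      simp [hN, Matrix.sum_apply, Matrix.vecMulVec_apply]
    simp_rw [h1, Finset.sum_mul]
    rw [Finset.sum_comm]
    refine Finset.sum_congr rfl fun j _ => ?_
    rw [Finset.mul_sum]
    exact Finset.sum_congr rfl fun l _ => by ring
  have hrow : ∀ k : Fin m2, ∑ i, pv N k i * (N *ᵥ qv N k) i
      = ∑ j, t j * ((∑ i, pv N k i * u j i) * (∑ l, qv N k l * v j l)) := by
    intro k
    simp_rw [hNmv]
    have hsplit : ∀ i, pv N k i * (∑ j, t j * u j i * (∑ l, v j l * qv N k l))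
        = ∑ j, pv N k i * (t j * u j i * (∑ l, v j l * qv N k l)) :=
      fun i => Finset.mul_sum _ _ _
    simp_rw [hsplit]
    rw [Finset.sum_comm]
    refine Finset.sum_congr rfl fun j _ => ?_
    have hC : ∑ l, v j l * qv N k l = ∑ l, qv N k l * v j l :=
      Finset.sum_congr rfl fun l _ => mul_comm _ _
    calc ∑ i, pv N k i * (t j * u j i * (∑ l, v j l * qv N k l))
        = (t j * (∑ l, v j l * qv N k l)) * ∑ i, pv N k i * u j i := by
          rw [Finset.mul_sum]
          exact Finset.sum_congr rfl fun i _ => by ring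
      _ = t j * ((∑ i, pv N k i * u j i) * (∑ l, qv N k l * v j l)) := by
          rw [← hC]; ring
  simp_rw [hrow]
  rw [Finset.sum_comm]
  refine Finset.sum_le_sum fun j _ => ?_
  have hp : ∑ k, (∑ i, pv N k i * u j i) * (∑ l, qv N k l * v j l) ≤ 1 := by
    refine pairing (pv N) (qv N) (u j) (v j) ?_ ?_ ?_ ?_ ?_ ?_
    · exact fun a b hab => pv_orth N a b hab
    · exact fun a => pv_norm N a
    · exact fun a b hab => by rw [qv_orth N a b, if_neg hab]
    · exact fun a => by rw [qv_orth N a a, if_pos rfl]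
    · rw [hu j j, if_pos rfl]
    · rw [hv j j, if_pos rfl]
  calc ∑ k, t j * ((∑ i, pv N k i * u j i) * (∑ l, qv N k l * v j l))
      = t j * ∑ k, (∑ i, pv N k i * u j i) * (∑ l, qv N k l * v j l) :=
        (Finset.mul_sum _ _ _).symm
    _ ≤ t j * 1 := mul_le_mul_of_nonneg_left hp (ht j)
    _ = t j := mul_one _

/-- Master inequality: for `Ahat` obtained by soft-thresholding at level `c/2`,
`F(Ahat) + ‖A - Ahat‖² ≤ F(A)` for every `A`, where `F(A) = ‖A-X‖² + c‖A‖₁`. -/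
theorem master {m1 m2 r : ℕ} (c : ℝ) (hc : 0 < c)
    (X : Matrix (Fin m1) (Fin m2) ℝ)
    (σ : Fin r → ℝ) (u : Fin r → Fin m1 → ℝ) (v : Fin r → Fin m2 → ℝ)
    (hσ0 : ∀ j, 0 ≤ σ j)
    (hu : ∀ j k : Fin r, ∑ i, u j i * u k i = if j = k then (1 : ℝ) else 0)
    (hv : ∀ j k : Fin r, ∑ i, v j i * v k i = if j = k then (1 : ℝ) else 0)
    (hX : X = ∑ j, σ j • Matrix.vecMulVec (u j) (v j))
    (Ahat : Matrix (Fin m1) (Fin m2) ℝ)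
    (hAhat : Ahat = ∑ j, max (σ j - c / 2) 0 • Matrix.vecMulVec (u j) (v j))
    (A : Matrix (Fin m1) (Fin m2) ℝ) :
    frob (Ahat - X) ^ 2 + c * nuc Ahat + frob (A - Ahat) ^ 2
      ≤ frob (A - X) ^ 2 + c * nuc A := by
  classical
  set t : Fin r → ℝ := fun j => max (σ j - c / 2) 0 with htdef
  set w : Fin r → ℝ := fun j => σ j - t j with hwdef
  have ht0 : ∀ j, 0 ≤ t j := fun j => le_max_right _ _
  have hw0 : ∀ j, 0 ≤ w j := by
    intro j
    have : t j ≤ σ j := max_le (by linarith [hc]) (hσ0 j)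
    simpa [hwdef] using this
  have hwc : ∀ j, w j ≤ c / 2 := by
    intro j
    have : σ j - c / 2 ≤ t j := le_max_left _ _
    simp only [hwdef]
    linarith
  have hwt : ∀ j, w j * t j = c / 2 * t j := by
    intro j
    rcases le_or_gt (σ j - c / 2) 0 with h | h
    · have ht : t j = 0 := max_eq_right h
      rw [ht, mul_zero, mul_zero]
    · have ht : t j = σ j - c / 2 := max_eq_left h.le
      simp only [hwdef, ht]
      ring
  -- the difference matrix
  have hD : X - Ahat = ∑ j, w j • Matrix.vecMulVec (u j) (v j) := by
    rw [hX, hAhat, ← Finset.sum_sub_distrib]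
    exact Finset.sum_congr rfl fun j _ => by rw [← sub_smul]
  have hDD : tip (X - Ahat) (X - Ahat) = ∑ j, w j * w j := by
    rw [hD]; exact tip_sum_sum w w u v hu hv
  have hDAhat : tip (X - Ahat) Ahat = ∑ j, w j * t j := by
    rw [hD, hAhat]; exact tip_sum_sum w t u v hu hv
  have hDA : tip (X - Ahat) A = ∑ j, w j * tip (Matrix.vecMulVec (u j) (v j)) A := by
    rw [hD, tip_sum_left]
    exact Finset.sum_congr rfl fun j _ => tip_smul_left _ _ _
  -- quadratic expansion
  have expand : tip (A - X) (A - X)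
      = tip (A - Ahat) (A - Ahat) - 2 * tip (X - Ahat) (A - Ahat)
        + tip (X - Ahat) (X - Ahat) := by
    have hAX : A - X = (A - Ahat) - (X - Ahat) := by abel
    rw [hAX]
    simp only [tip_sub_left, tip_sub_right]
    rw [tip_comm A Ahat, tip_comm A X, tip_comm X Ahat]
    ring
  -- duality bound
  have hdual : ∑ j, w j * tip (Matrix.vecMulVec (u j) (v j)) A ≤ c / 2 * nuc A := by
    have h1 := dual_bound A (fun j => w j / (c / 2)) u v
      (fun j => div_nonneg (hw0 j) (by linarith))
      (fun j => by
        rw [div_le_one (by linarith : (0:ℝ) < c / 2)]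
        exact hwc j) hu hv
    have h2 : ∑ j, w j * tip (Matrix.vecMulVec (u j) (v j)) A
        = c / 2 * ∑ j, (w j / (c / 2)) * tip (Matrix.vecMulVec (u j) (v j)) A := by
      rw [Finset.mul_sum]
      refine Finset.sum_congr rfl fun j _ => ?_
      field_simp
    rw [h2]
    exact mul_le_mul_of_nonneg_left h1 (by linarith)
  -- nuclear norm of Ahat
  have hnucAhat : nuc Ahat ≤ ∑ j, t j := by
    rw [hAhat]; exact nuc_le_sum t ht0 u v hu hv
  -- swap lemma for frob of Ahat - X
  have hswap : tip (Ahat - X) (Ahat - X) = tip (X - Ahat) (X - Ahat) := by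
    simp only [tip_eq_sum, Matrix.sub_apply]
    refine Finset.sum_congr rfl fun i _ => Finset.sum_congr rfl fun j _ => by ring
  have hsumwt : ∑ j, w j * t j = c / 2 * ∑ j, t j := by
    rw [Finset.mul_sum]
    exact Finset.sum_congr rfl fun j _ => hwt j
  have tXA : tip (X - Ahat) (A - Ahat)
      = (∑ j, w j * tip (Matrix.vecMulVec (u j) (v j)) A) - ∑ j, w j * t j := by
    rw [tip_sub_right, hDA, hDAhat]
  -- put everything together
  rw [frob_sq, frob_sq, frob_sq, hswap, hDD, expand, hDD, tXA, hsumwt]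
  nlinarith [hdual, hnucAhat, hc]

end SoftThresh

/-- soft-thresholding of singular values. If `X = ∑ⱼ σⱼ uⱼ vⱼᵀ` is a singular
value decomposition of `X` (orthonormal `uⱼ`, `vⱼ`, positive nonincreasing `σⱼ`), then
`Â = ∑ⱼ (σⱼ − λm₁m₂/2)₊ uⱼ vⱼᵀ` is the unique minimizer of
`F(A) = ‖A − X‖₂² + λ m₁ m₂ ‖A‖₁` over `A ∈ ℝ^{m₁×m₂}`. -/
theorem soft_thresholding_minimizes_nuclear_penalized_objective
    (m1 m2 : ℕ) (hm1 : 1 ≤ m1) (hm2 : 1 ≤ m2) (lam : ℝ) (hlam : 0 < lam)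
    (X : Matrix (Fin m1) (Fin m2) ℝ) (r : ℕ)
    (σ : Fin r → ℝ) (u : Fin r → Fin m1 → ℝ) (v : Fin r → Fin m2 → ℝ)
    (hσpos : ∀ j, 0 < σ j)
    (hσmono : ∀ j k : Fin r, j ≤ k → σ k ≤ σ j)
    (hu : ∀ j k : Fin r, ∑ i, u j i * u k i = if j = k then (1 : ℝ) else 0)
    (hv : ∀ j k : Fin r, ∑ i, v j i * v k i = if j = k then (1 : ℝ) else 0)
    (hX : X = ∑ j, σ j • Matrix.vecMulVec (u j) (v j))
    (Ahat : Matrix (Fin m1) (Fin m2) ℝ)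
    (hAhat : Ahat =
      ∑ j, max (σ j - lam * (m1 * m2 : ℝ) / 2) 0 • Matrix.vecMulVec (u j) (v j)) :
    (∀ A : Matrix (Fin m1) (Fin m2) ℝ, Fobj lam X Ahat ≤ Fobj lam X A) ∧
    (∀ B : Matrix (Fin m1) (Fin m2) ℝ,
      (∀ A : Matrix (Fin m1) (Fin m2) ℝ, Fobj lam X B ≤ Fobj lam X A) → B = Ahat) := by
  have hc : 0 < lam * ((m1 : ℝ) * (m2 : ℝ)) := by
    have h1 : (0:ℝ) < m1 := by exact_mod_cast Nat.lt_of_lt_of_le Nat.zero_lt_one hm1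
    have h2 : (0:ℝ) < m2 := by exact_mod_cast Nat.lt_of_lt_of_le Nat.zero_lt_one hm2
    exact mul_pos hlam (mul_pos h1 h2)
  have key := SoftThresh.master (lam * ((m1 : ℝ) * (m2 : ℝ))) hc X σ u v
    (fun j => (hσpos j).le) hu hv hX Ahat hAhat
  have hF : ∀ A : Matrix (Fin m1) (Fin m2) ℝ,
      Fobj lam X A = frob (A - X) ^ 2 + lam * ((m1 : ℝ) * (m2 : ℝ)) * nuc A :=
    fun A => rfl
  have key' : ∀ A : Matrix (Fin m1) (Fin m2) ℝ,
      Fobj lam X Ahat + frob (A - Ahat) ^ 2 ≤ Fobj lam X A := by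
    intro A
    have h := key A
    rw [hF A, hF Ahat]
    linarith
  constructor
  · intro A
    linarith [key' A, sq_nonneg (frob (A - Ahat))]
  · intro B hB
    have h3 : frob (B - Ahat) ^ 2 ≤ 0 := by linarith [key' B, hB Ahat]
    have h5 := SoftThresh.frob_sq (B - Ahat)
    have h6 : 0 ≤ tip (B - Ahat) (B - Ahat) := by
      rw [SoftThresh.tip_eq_sum]
      exact Finset.sum_nonneg fun i _ => Finset.sum_nonneg fun j _ => mul_self_nonneg _
    have h4 : tip (B - Ahat) (B - Ahat) = 0 := by
      rw [← h5]; rw [← h5] at h6; linarith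
    rw [SoftThresh.tip_eq_sum] at h4
    ext i j
    have h7 := (Finset.sum_eq_zero_iff_of_nonneg
      (fun i _ => Finset.sum_nonneg fun j _ => mul_self_nonneg ((B - Ahat) i j))).mp
      h4 i (Finset.mem_univ i)
    have h8 := (Finset.sum_eq_zero_iff_of_nonneg
      (fun j _ => mul_self_nonneg ((B - Ahat) i j))).mp h7 j (Finset.mem_univ j)
    have h9 : (B - Ahat) i j = 0 := mul_self_eq_zero.mp h8
    simpa [Matrix.sub_apply, sub_eq_zero] using h9

end
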